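/- Let K be a field of characteristic zero and let η ∈ K be nonzero and not a root of unity; set α = 1+η. For κ ∈ K define the sequence κ_{−1} = 0, κ_0 = κ, and κ_n = η⁻¹·(α·κ_{n−1} − κ_{n−2} + 1) for n ≥ 1. Then the set of κ ∈ K such that κ_n ≠ 0 for all n ≥ 0 is infinite. -/

import Mathlib

/-- The sequence `κ_{−1} = 0`, `κ_0 = k`, `κ_n = η⁻¹·(α·κ_{n−1} − κ_{n−2} + 1)` (indexed
from `0`, so `kapSeq η α k 1 = η⁻¹·(α·k − 0 + 1)`). -/
def kapSeq {K : Type*} [Field K] (η α : K) (k : K) : ℕ → K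
  | 0 => k
  | 1 => η⁻¹ * (α * k - 0 + 1)
  | n + 2 => η⁻¹ * (α * kapSeq η α k (n + 1) - kapSeq η α k n + 1)

set_option linter.unreachableTactic false
set_option linter.unusedTactic false

private lemma sq_le_two_pow : ∀ k : ℕ, 4 ≤ k → k^2 ≤ 2^k := by
  intro k hk
  induction k with
  | zero => omega
  | succ m ih =>
    rcases Nat.lt_or_ge m 4 with h | h
    · interval_cases m <;> first | omega | norm_num
    · have h1 := ih (by omega)
      have h2 : 2*m + 1 ≤ m^2 := by nlinarith
      calc (m+1)^2 = m^2 + (2*m+1) := by ring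
        _ ≤ m^2 + m^2 := by omega
        _ = 2 * m^2 := by ring
        _ ≤ 2 * 2^m := by omega
        _ = 2^(m+1) := by rw [pow_succ]; ring

private lemma kapSeq_closed {K : Type*} [Field K] (η k : K) (hη0 : η ≠ 0) :
    ∀ n : ℕ, (η - 1)^2 * η^n * kapSeq η (1+η) k n
      = (k*η*(η-1) - 1)*η^n + (1 - k*(η-1)) + (n:K)*(η-1)*η^n := by
  intro n
  induction n using Nat.twoStepInduction with
  | zero => simp [kapSeq]; ring
  | one =>
      show (η - 1)^2 * η^1 * (η⁻¹ * ((1+η) * k - 0 + 1)) = _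
      field_simp
      ring
  | more n ih1 ih2 =>
      have h2 : kapSeq η (1+η) k (n+2)
          = η⁻¹ * ((1+η) * kapSeq η (1+η) k (n + 1) - kapSeq η (1+η) k n + 1) := rfl
      have key : (η - 1)^2 * η^(n+2) * kapSeq η (1+η) k (n+2)
          = (1+η) * ((η - 1)^2 * η^(n+1) * kapSeq η (1+η) k (n+1))
            - η * ((η - 1)^2 * η^n * kapSeq η (1+η) k n)
            + (η-1)^2 * η^(n+1) := by
        rw [h2]
        field_simp
        ring
      rw [key, ih1, ih2]
      push_cast
      ring

private lemma kapSeq_bad {K : Type*} [Field K] (η : K) (hη0 : η ≠ 0) (hη1 : η ≠ 1)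
    (j n : ℕ) (h : kapSeq η (1+η) (((j:K) + (η-1)⁻¹) * η⁻¹) n = 0) :
    ((j:K) + (n:K)) * η^(n+1) = (j:K) - 1 := by
  have hm : η - 1 ≠ 0 := sub_ne_zero.mpr hη1
  have hc := kapSeq_closed η (((j:K) + (η-1)⁻¹) * η⁻¹) hη0 n
  rw [h, mul_zero] at hc
  have hηn : η ^ n ≠ 0 := pow_ne_zero _ hη0
  field_simp at hc
  have goal : (((j:K) + (n:K)) * η^(n+1) - ((j:K) - 1)) * (η-1)^2 = 0 := by
    rw [pow_succ]
    linear_combination -(η - 1) * hc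
  rcases mul_eq_zero.mp goal with h1 | h1
  · exact sub_eq_zero.mp h1
  · exact absurd h1 (pow_ne_zero _ hm)

/-- Corollary 4.8: over a field of characteristic zero, if `η` is nonzero
and not a root of unity and `α = 1 + η`, then the set of `κ ∈ K` for which the sequence
`κ_n` (with `κ_{−1} = 0`, `κ_0 = κ`, `κ_n = η⁻¹(ακ_{n−1} − κ_{n−2} + 1)`) never vanishes
is infinite.  (Equivalently, `A_η` has infinitely many pairwise non-isomorphic simple
lowest weight modules `W(κ)`.) -/
theorem infinitely_many_simple_lowest_weight {K : Type*} [Field K] [CharZero K]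
    (η : K) (hη0 : η ≠ 0) (hη : ∀ n : ℕ, 0 < n → η ^ n ≠ 1) :
    {k : K | ∀ n : ℕ, kapSeq η (1 + η) k n ≠ 0}.Infinite := by
  by_contra hfin
  rw [Set.not_infinite] at hfin
  have hη1 : η ≠ 1 := fun h => hη 1 one_pos (by rw [h, pow_one])
  have hm : η - 1 ≠ 0 := sub_ne_zero.mpr hη1
  set kmap : ℕ → K := fun j => ((j:K) + (η-1)⁻¹) * η⁻¹ with hkmap
  have hkinj : Function.Injective kmap := by
    intro i j hij
    simp only [hkmap] at hij
    have h1 := mul_right_cancel₀ (inv_ne_zero hη0) hij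
    have h2 : (i:K) = (j:K) := add_right_cancel h1
    exact_mod_cast h2
  -- the set of bad indices j
  have hBinf : {j : ℕ | 2 ≤ j ∧ ∃ n, kapSeq η (1+η) (kmap j) n = 0}.Infinite := by
    have h2 : (kmap ⁻¹' {k : K | ∀ n : ℕ, kapSeq η (1 + η) k n ≠ 0}).Finite :=
      Set.Finite.preimage (hkinj.injOn) hfin
    have h3 : ((Set.Ici 2 : Set ℕ) \ (kmap ⁻¹' {k : K | ∀ n : ℕ, kapSeq η (1 + η) k n ≠ 0})).Infinite :=
      Set.Infinite.diff (Set.Ici_infinite 2) h2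
    refine h3.mono ?_
    rintro j ⟨hj1, hj2⟩
    refine ⟨hj1, ?_⟩
    simpa [Set.mem_preimage, not_forall] using hj2
  set B := {j : ℕ | 2 ≤ j ∧ ∃ n, kapSeq η (1+η) (kmap j) n = 0} with hB
  classical
  let N : ℕ → ℕ := fun j => if h : ∃ n, kapSeq η (1+η) (kmap j) n = 0 then h.choose else 0
  have hN : ∀ j ∈ B, ((j:K) + (N j : K)) * η^(N j + 1) = (j:K) - 1 := by
    intro j hj
    obtain ⟨-, hex⟩ := hj
    have hzero : kapSeq η (1+η) (kmap j) (N j) = 0 := by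
      simp only [N, dif_pos hex]
      exact hex.choose_spec
    exact kapSeq_bad η hη0 hη1 j (N j) hzero
  have hNinj : Set.InjOn N B := by
    intro i hi j hj hij
    by_contra hne
    have e1 := hN i hi
    have e2 := hN j hj
    rw [hij] at e1
    have hij0 : (i:K) - (j:K) ≠ 0 :=
      sub_ne_zero.mpr (fun hc => hne (Nat.cast_injective hc))
    have h1 : ((i:K) - (j:K)) * η^(N j + 1) = ((i:K) - (j:K)) * 1 := by
      rw [mul_one]; linear_combination e1 - e2
    exact hη _ (Nat.succ_pos _) (mul_left_cancel₀ hij0 h1)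
  have himg : (N '' B).Infinite := hBinf.image hNinj
  -- the group of exponents with rational powers
  set G := {d : ℕ | 0 < d ∧ ∃ q : ℚ, (q:K) = η^d} with hG
  -- every bad j contributes N j + 1 to G
  have hmemG : ∀ j ∈ B, (N j + 1) ∈ G := by
    intro j hj
    have hj2 := hj.1
    refine ⟨Nat.succ_pos _, ((j:ℚ) - 1)/((j:ℚ) + (N j : ℚ)), ?_⟩
    have hd : ((j:K) + (N j:K)) ≠ 0 := by
      have h0 : ((j + N j : ℕ) : K) ≠ 0 := Nat.cast_ne_zero.mpr (by omega)
      rw [Nat.cast_add] at h0; exact h0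
    have heq := hN j hj
    rw [Rat.cast_div, Rat.cast_sub, Rat.cast_one, Rat.cast_add, Rat.cast_natCast,
      Rat.cast_natCast, div_eq_iff hd]
    linear_combination -heq
  obtain ⟨j0, hj0⟩ := hBinf.nonempty
  have hGne : G.Nonempty := ⟨N j0 + 1, hmemG j0 hj0⟩
  set g := sInf G with hgdef
  obtain ⟨hgpos, r, hr⟩ : 0 < g ∧ ∃ q : ℚ, (q:K) = η^g := Nat.sInf_mem hGne
  have hgdvd : ∀ d ∈ G, g ∣ d := by
    intro d hd
    obtain ⟨hdpos, qd, hqd⟩ := hd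
    rcases Nat.eq_zero_or_pos (d % g) with h0 | hpos
    · exact Nat.dvd_of_mod_eq_zero h0
    · exfalso
      have hrK : ((r ^ (d / g) : ℚ) : K) = η ^ (g * (d / g)) := by
        rw [pow_mul, Rat.cast_pow, hr]
      have hrKne : ((r ^ (d / g) : ℚ) : K) ≠ 0 := by
        rw [hrK]; exact pow_ne_zero _ hη0
      have hmem : d % g ∈ G := by
        refine ⟨hpos, qd / r ^ (d / g), ?_⟩
        rw [Rat.cast_div, hqd, hrK, div_eq_iff (hrK ▸ hrKne), ← pow_add]
        congr 1
        exact (Nat.mod_add_div d g).symm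
      have h1 := Nat.sInf_le hmem
      have h2 := Nat.mod_lt d hgpos
      omega
  have hrne0 : r ≠ 0 := by
    intro h
    rw [h, Rat.cast_zero] at hr
    exact pow_ne_zero g hη0 hr.symm
  have hrpow : ∀ m : ℕ, 0 < m → r ^ m ≠ 1 := by
    intro m hmpos h
    apply hη (g * m) (by positivity)
    rw [pow_mul, ← hr, ← Rat.cast_pow, h, Rat.cast_one]
  -- choose a large bad index
  obtain ⟨x, hxB, hxgt⟩ := himg.exists_gt (g * (2*g+5))
  obtain ⟨j, hjB, rfl⟩ := hxB
  set n := N j with hndef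
  have hj2 : 2 ≤ j := hjB.1
  have heq : ((j:K) + (n:K)) * η^(n+1) = (j:K) - 1 := hN j hjB
  obtain ⟨hn1pos, q, hq⟩ := hmemG j hjB
  obtain ⟨s, hs⟩ := hgdvd (n+1) ⟨hn1pos, q, hq⟩
  have hspos : 0 < s := by
    rcases Nat.eq_zero_or_pos s with h | h
    · rw [h, Nat.mul_zero] at hs; omega
    · exact h
  have hsbig : 2*g + 6 ≤ s := by
    by_contra h
    push_neg at h
    have h2 : g * s ≤ g * (2*g+5) := Nat.mul_le_mul_left g (by omega)
    have h3 : n + 1 ≤ g * (2*g+5) := by rw [hs]; exact h2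
    have h4 : n + 1 < n := h3.trans_lt hxgt
    omega
  -- rational equation
  have hdK : ((j:K) + (n:K)) ≠ 0 := by
    have h0 : ((j + n : ℕ) : K) ≠ 0 := Nat.cast_ne_zero.mpr (by omega)
    rw [Nat.cast_add] at h0; exact h0
  have hdQ : ((j:ℚ) + (n:ℚ)) ≠ 0 := by
    have h0 : ((j + n : ℕ) : ℚ) ≠ 0 := Nat.cast_ne_zero.mpr (by omega)
    rw [Nat.cast_add] at h0; exact h0
  have hrs : r ^ s = ((j:ℚ) - 1)/((j:ℚ) + (n:ℚ)) := by
    apply Rat.cast_injective (α := K)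
    show ((r^s : ℚ) : K) = _
    rw [Rat.cast_pow, hr, ← pow_mul, ← hs]
    rw [Rat.cast_div, Rat.cast_sub, Rat.cast_one, Rat.cast_add, Rat.cast_natCast,
      Rat.cast_natCast, eq_div_iff hdK]
    linear_combination heq
  have hq1 : r ^ s * ((j:ℚ) + (n:ℚ)) = (j:ℚ) - 1 := by
    rw [hrs, div_mul_cancel₀ _ hdQ]
  -- r^s is in (0,1)
  have hpos : (0:ℚ) < r ^ s := by
    rw [hrs]
    apply div_pos
    · have : (2:ℚ) ≤ (j:ℚ) := by exact_mod_cast hj2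
      linarith
    · have : (0:ℚ) ≤ (n:ℚ) := Nat.cast_nonneg n
      have : (2:ℚ) ≤ (j:ℚ) := by exact_mod_cast hj2
      positivity
  have hlt1 : r ^ s < 1 := by
    rw [hrs, div_lt_one]
    · have : (0:ℚ) ≤ (n:ℚ) := Nat.cast_nonneg n
      linarith
    · have h2 : (2:ℚ) ≤ (j:ℚ) := by exact_mod_cast hj2
      have : (0:ℚ) ≤ (n:ℚ) := Nat.cast_nonneg n
      linarith
  have habs : |r| < 1 := by
    by_contra h
    push_neg at h
    have h1 : (1:ℚ) ≤ |r ^ s| := by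
      rw [abs_pow]; exact one_le_pow₀ h
    rw [abs_of_pos hpos] at h1
    linarith
  -- pass to integers
  obtain ⟨t, rfl⟩ : ∃ t, s = t + 1 := ⟨s - 1, by omega⟩
  have hbposQ : (0:ℚ) < (r.den : ℚ) := by exact_mod_cast r.pos
  have hZQ : ((r.num:ℤ):ℚ)^(t+1) * ((j:ℚ) + (n:ℚ)) = ((j:ℚ) - 1) * ((r.den:ℕ):ℚ)^(t+1) := by
    have h := hq1
    rw [← Rat.num_div_den r, div_pow, div_mul_eq_mul_div, div_eq_iff (pow_ne_zero _ hbposQ.ne')] at h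
    exact h
  have hZQ2 : ((r.num:ℤ):ℚ)^(t+1) * ((j:ℚ) + (n:ℚ)) + ((r.den:ℕ):ℚ)^(t+1)
      = (j:ℚ) * ((r.den:ℕ):ℚ)^(t+1) := by linear_combination hZQ
  have hZ : r.num^(t+1) * ((j:ℤ) + (n:ℤ)) + (r.den:ℤ)^(t+1) = (j:ℤ) * (r.den:ℤ)^(t+1) := by
    exact_mod_cast hZQ2
  have hcj : ((r.den:ℤ)^(t+1) - r.num^(t+1)) * (j:ℤ) = (r.den:ℤ)^(t+1) + (n:ℤ) * r.num^(t+1) := by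
    linear_combination -hZ
  have hcdvd : ((r.den:ℤ)^(t+1) - r.num^(t+1)) ∣ ((n:ℤ)+1) * r.num^(t+1) :=
    ⟨(j:ℤ) - 1, by linear_combination -hcj⟩
  have hcop : IsCoprime (r.num^(t+1)) ((r.den:ℤ)^(t+1)) := by
    apply IsCoprime.pow
    rw [Int.isCoprime_iff_gcd_eq_one]
    simpa [Int.gcd] using r.reduced
  have hcop2 : IsCoprime (r.num^(t+1)) ((r.den:ℤ)^(t+1) - r.num^(t+1)) := by
    have h1 := hcop.add_mul_left_right (-1)
    have h2 : (r.den:ℤ)^(t+1) + r.num^(t+1) * (-1) = (r.den:ℤ)^(t+1) - r.num^(t+1) := by ring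
    rwa [h2] at h1
  have hdvd2 : ((r.den:ℤ)^(t+1) - r.num^(t+1)) ∣ ((n:ℤ)+1) :=
    (hcop2.symm).dvd_of_dvd_mul_right hcdvd
  -- bounds
  have ha0 : r.num ≠ 0 := Rat.num_ne_zero.mpr hrne0
  have hA : |r.num| < (r.den:ℤ) := by
    have hnum : ((r.num:ℤ):ℚ) = r * ((r.den:ℕ):ℚ) := (Rat.mul_den_eq_num r).symm
    have h9 : |((r.num:ℤ):ℚ)| < ((r.den:ℕ):ℚ) := by
      rw [hnum, abs_mul, abs_of_pos hbposQ]
      calc |r| * ((r.den:ℕ):ℚ) < 1 * ((r.den:ℕ):ℚ) :=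
            mul_lt_mul_of_pos_right habs hbposQ
        _ = ((r.den:ℕ):ℚ) := one_mul _
    rw [← Int.cast_abs] at h9
    exact_mod_cast h9
  have hA1 : 1 ≤ |r.num| := Int.one_le_abs (by exact_mod_cast ha0)
  have hb2 : 2 ≤ (r.den:ℤ) := by omega
  have hc_lb : (r.den:ℤ)^t ≤ (r.den:ℤ)^(t+1) - r.num^(t+1) := by
    have h1' : r.num^(t+1) ≤ |r.num|^(t+1) := by
      calc r.num^(t+1) ≤ |r.num^(t+1)| := le_abs_self _
        _ = |r.num|^(t+1) := abs_pow r.num (t+1)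
    have h2 : |r.num|^(t+1) ≤ ((r.den:ℤ)-1)^(t+1) := pow_le_pow_left₀ (abs_nonneg r.num) (by omega) _
    have h3 : ((r.den:ℤ)-1)^(t+1) = ((r.den:ℤ)-1) * ((r.den:ℤ)-1)^t := by rw [pow_succ']
    have h4 : ((r.den:ℤ)-1)^t ≤ (r.den:ℤ)^t := pow_le_pow_left₀ (by omega) (by omega) _
    have h5 : (r.den:ℤ)^(t+1) = (r.den:ℤ) * (r.den:ℤ)^t := by rw [pow_succ']
    have h6 : (0:ℤ) ≤ (r.den:ℤ)^t := pow_nonneg (by omega) _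
    nlinarith
  have hc_le : (r.den:ℤ)^(t+1) - r.num^(t+1) ≤ (n:ℤ) + 1 := Int.le_of_dvd (by positivity) hdvd2
  have h2pow : (2:ℤ)^t ≤ (n:ℤ) + 1 := by
    have h7 : (2:ℤ)^t ≤ (r.den:ℤ)^t := pow_le_pow_left₀ (by norm_num) hb2 _
    linarith
  have hfinal : 2^t ≤ g * (t+1) := by
    have h8 : ((2:ℤ))^t ≤ ((g * (t+1) : ℕ) : ℤ) := by
      have : ((n:ℤ) + 1) = ((n + 1 : ℕ) : ℤ) := by push_cast; ring
      rw [this] at h2pow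
      rwa [hs] at h2pow
    exact_mod_cast h8
  have hsq := sq_le_two_pow t (by omega)
  have ht5 : 2*g + 5 ≤ t := by omega
  have hgt : t * t ≤ g * (t + 1) := by
    calc t * t = t^2 := by ring
      _ ≤ 2^t := hsq
      _ ≤ g * (t+1) := hfinal
  nlinarith [hgt, ht5, hgpos]
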